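/- The logarithmic spiral X = {(e^φ cos φ, e^φ sin φ) : φ ∈ ℝ} ⊂ ℝ² with the Euclidean metric is an R-space: if two sequences (x_n), (y_n) in X satisfy |d(x_n,x_m) − d(y_n,y_m)| ≤ C for all n, m, then sup_n d(x_n, y_n) < ∞. -/

import Mathlib

/-- The logarithmic spiral `r = e^φ` in the plane (identified with `ℂ`, whose metric
is the Euclidean metric of `ℝ²`). -/
def Spiral : Set ℂ := {z | ∃ φ : ℝ, z = Real.exp φ * Complex.exp (φ * Complex.I)}

lemma norm_circle_exp (θ : ℝ) : ‖Complex.exp (θ * Complex.I)‖ = 1 :=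
  Complex.norm_exp_ofReal_mul_I θ

lemma abs_exp_mul_I_sub_one_le (θ : ℝ) :
    ‖Complex.exp (θ * Complex.I) - 1‖ ≤ |θ| := by
  have h1 : Complex.exp (θ * Complex.I) = Complex.cos θ + Complex.sin θ * Complex.I :=
    Complex.exp_mul_I _
  have hsq : (‖Complex.exp (θ * Complex.I) - 1‖) ^ 2 = 2 - 2 * Real.cos θ := by
    rw [← Complex.normSq_eq_norm_sq, h1]
    have : (Complex.cos θ + Complex.sin θ * Complex.I - 1)
        = Complex.ofReal (Real.cos θ - 1) + Complex.ofReal (Real.sin θ) * Complex.I := by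
      push_cast; ring
    rw [this, Complex.normSq_add_mul_I]
    have hc := Real.sin_sq_add_cos_sq θ
    ring_nf
    nlinarith [hc]
  have hcos := Real.one_sub_sq_div_two_le_cos (x := θ)
  have h2 : (‖Complex.exp (θ * Complex.I) - 1‖) ^ 2 ≤ |θ| ^ 2 := by
    rw [hsq, sq_abs]; nlinarith
  nlinarith [h2, norm_nonneg (Complex.exp (θ * Complex.I) - 1), abs_nonneg θ]

lemma spiral_dist_le {s t : ℝ} (hst : s ≤ t) :
    dist (Real.exp s * Complex.exp (s * Complex.I)) (Real.exp t * Complex.exp (t * Complex.I))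
      ≤ 2 * (Real.exp t - Real.exp s) := by
  rw [Complex.dist_eq]
  have key : (Real.exp s : ℂ) * Complex.exp (s * Complex.I)
      - Real.exp t * Complex.exp (t * Complex.I)
      = (Real.exp s : ℂ) * (Complex.exp (s * Complex.I) - Complex.exp (t * Complex.I))
        + ((Real.exp s : ℝ) - Real.exp t) * Complex.exp (t * Complex.I) := by
    push_cast; ring
  rw [key]
  have h1 : ‖(Real.exp s : ℂ) * (Complex.exp (s * Complex.I)
      - Complex.exp (t * Complex.I))‖ ≤ Real.exp s * (t - s) := by
    rw [norm_mul, Complex.norm_real, Real.norm_eq_abs, abs_of_pos (Real.exp_pos s)]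
    have hdiff : Complex.exp (s * Complex.I) - Complex.exp (t * Complex.I)
        = Complex.exp (t * Complex.I) * (Complex.exp ((s - t) * Complex.I) - 1) := by
      rw [mul_sub, ← Complex.exp_add, mul_one]
      push_cast; ring_nf
    rw [hdiff, norm_mul, norm_circle_exp, one_mul]
    have := abs_exp_mul_I_sub_one_le (s - t)
    rw [Complex.ofReal_sub] at this
    have habs : |s - t| = t - s := by rw [abs_sub_comm]; exact abs_of_nonneg (by linarith)
    rw [habs] at this
    exact mul_le_mul_of_nonneg_left this (Real.exp_pos s).le
  have h2 : ‖((Real.exp s : ℂ) - (Real.exp t : ℂ)) * Complex.exp (t * Complex.I)‖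
      = Real.exp t - Real.exp s := by
    rw [norm_mul, ← Complex.ofReal_sub, Complex.norm_real, Real.norm_eq_abs, norm_circle_exp, mul_one,
      abs_sub_comm]
    exact abs_of_nonneg (by linarith [Real.exp_le_exp.mpr hst])
  have h3 : Real.exp s * (t - s) ≤ Real.exp t - Real.exp s := by
    have h4 : Real.exp s * Real.exp (t - s) = Real.exp t := by
      rw [← Real.exp_add]; ring_nf
    nlinarith [Real.add_one_le_exp (t - s), Real.exp_pos s]
  calc ‖_‖ ≤ _ + _ := norm_add_le _ _
    _ ≤ Real.exp s * (t - s) + (Real.exp t - Real.exp s) := by rw [h2]; linarith [h1]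
    _ ≤ 2 * (Real.exp t - Real.exp s) := by linarith

/-- the logarithmic spiral is an R-space: if sequences `(x_n), (y_n)`
on the spiral satisfy `|d(x_n, x_m) - d(y_n, y_m)| ≤ C` for all `n, m`, then
`sup_n d(x_n, y_n) < ∞`. -/
theorem stmt17 (C : ℝ) (hC : 0 < C) (x y : ℕ → ℂ)
    (hx : ∀ n, x n ∈ Spiral) (hy : ∀ n, y n ∈ Spiral)
    (h : ∀ n m, |dist (x n) (x m) - dist (y n) (y m)| ≤ C) :
    ∃ D : ℝ, ∀ n, dist (x n) (y n) ≤ D := by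
  set E : ℝ := ‖x 0‖ + ‖y 0‖ + C with hE
  refine ⟨2 * E, fun n => ?_⟩
  obtain ⟨s, hs⟩ := hx n
  obtain ⟨t, ht⟩ := hy n
  have hxn : ‖x n‖ = Real.exp s := by
    rw [hs, norm_mul, Complex.norm_real, Real.norm_eq_abs,
      norm_circle_exp, mul_one, abs_of_pos (Real.exp_pos s)]
  have hyn : ‖y n‖ = Real.exp t := by
    rw [ht, norm_mul, Complex.norm_real, Real.norm_eq_abs,
      norm_circle_exp, mul_one, abs_of_pos (Real.exp_pos t)]
  -- the norms of x n and y n differ by at most E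
  have hnorm : |‖x n‖ - ‖y n‖| ≤ E := by
    have h0 := h n 0
    have hx0 : ‖x n‖ - ‖x 0‖ ≤ dist (x n) (x 0) := by
      rw [dist_eq_norm]; exact (le_abs_self _).trans (abs_norm_sub_norm_le _ _)
    have hy0 : ‖y n‖ - ‖y 0‖ ≤ dist (y n) (y 0) := by
      rw [dist_eq_norm]; exact (le_abs_self _).trans (abs_norm_sub_norm_le _ _)
    have hdx : dist (x n) (x 0) ≤ ‖x n‖ + ‖x 0‖ := by
      rw [dist_eq_norm]; exact norm_sub_le _ _
    have hdy : dist (y n) (y 0) ≤ ‖y n‖ + ‖y 0‖ := by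
      rw [dist_eq_norm]; exact norm_sub_le _ _
    rw [abs_le]
    rw [abs_le] at h0
    constructor <;> nlinarith [hx0, hy0, hdx, hdy, h0.1, h0.2]
  rw [hs, ht]
  rcases le_total s t with hst | hst
  · calc dist _ _ ≤ 2 * (Real.exp t - Real.exp s) := spiral_dist_le hst
      _ ≤ 2 * E := by
        have : Real.exp t - Real.exp s ≤ E := by
          rw [hxn, hyn] at hnorm
          have := abs_le.mp hnorm
          linarith [this.1]
        linarith
  · rw [dist_comm]
    calc dist _ _ ≤ 2 * (Real.exp s - Real.exp t) := spiral_dist_le hst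
      _ ≤ 2 * E := by
        have : Real.exp s - Real.exp t ≤ E := by
          rw [hxn, hyn] at hnorm
          have := abs_le.mp hnorm
          linarith [this.2]
        linarith
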